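/- arXiv:1903.10056 — 4 statements merged into one kernel-verified Lean document; each statement's English description precedes it below -/
import Mathlib

section
/- For a connection ∇ on a Lie algebra with curvature R, torsion T, dual connection ∇̄ with curvature R̄, the covariant derivative of torsion satisfies (∇_Z T)(X,Y) = R̄(X,Y)Z + R(Y,Z)X + R(Z,X)Y for all X, Y, Z. -/
/-- Torsion of a connection on a Lie algebra. -/
def torsion {L : Type*} [LieRing L] (D : L → L → L) (X Y : L) : L := D X Y - D Y X - ⁅X, Y⁆
/-- Curvature of a connection on a Lie algebra. -/
def curvature {L : Type*} [LieRing L] (D : L → L → L) (X Y Z : L) : L :=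
  D X (D Y Z) - D Y (D X Z) - D ⁅X, Y⁆ Z
/-- Dual connection. -/
def dualConn {L : Type*} [LieRing L] (D : L → L → L) (X Y : L) : L := D Y X + ⁅X, Y⁆
/-- Covariant derivative of torsion: `(∇_Z T)(X,Y)`. -/
def covTorsion {L : Type*} [LieRing L] (D : L → L → L) (Z X Y : L) : L :=
  D Z (torsion D X Y) - torsion D (D Z X) Y - torsion D X (D Z Y)

/-- `(∇_Z T)(X,Y) = R̄(X,Y)Z + R(Y,Z)X + R(Z,X)Y`. -/
theorem covTorsion_eq {K : Type*} [Field K] [CharZero K]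
    {L : Type*} [LieRing L] [LieAlgebra K L] (D : L →ₗ[K] L →ₗ[K] L) :
    ∀ X Y Z : L,
      covTorsion (fun X Y => D X Y) Z X Y
        = curvature (dualConn (fun X Y => D X Y)) X Y Z
          + curvature (fun X Y => D X Y) Y Z X
          + curvature (fun X Y => D X Y) Z X Y := by
  intro X Y Z
  simp only [covTorsion, torsion, curvature, dualConn, map_sub, map_add, LinearMap.sub_apply,
    LinearMap.add_apply, lie_sub, sub_lie, add_lie, lie_add]


  have e : ⁅X, Z⁆ = -⁅Z, X⁆ := (neg_eq_iff_eq_neg.mp (lie_skew Z X))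
  have h1 : (D ⁅X,Z⁆) Y + (D ⁅Z,X⁆) Y = 0 := by
    rw [e, map_neg, LinearMap.neg_apply, neg_add_cancel]
  have h2 : ⁅(D Z) X, Y⁆ + ⁅Y, (D Z) X⁆ = 0 := by
    rw [← lie_skew Y ((D Z) X)]; exact add_neg_cancel _
  have h3 := lie_lie X Y Z
  linear_combination (norm := module) h2 + h1 + h3
end

section
/- Let ∇ be a flat connection on a Lie algebra (R = 0). Then the dual connection ∇̄ is flat (R̄ = 0) if and only if the torsion of ∇ is parallel (∇T = 0). -/
/-- Under flatness, the dual curvature equals the covariant derivative of torsion. -/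
theorem dual_curv_eq_covTorsion {K : Type*} [Field K] [CharZero K]
    {L : Type*} [LieRing L] [LieAlgebra K L] (D : L →ₗ[K] L →ₗ[K] L)
    (hflat : ∀ X Y Z : L, curvature (fun X Y => D X Y) X Y Z = 0)
    (X Y Z : L) :
    curvature (dualConn (fun X Y => D X Y)) X Y Z = covTorsion (fun X Y => D X Y) Z X Y := by
  have h1 := hflat X Z Y
  have h2 := hflat Y Z X
  simp only [curvature, dualConn, covTorsion, torsion, map_add, map_sub,
    LinearMap.add_apply, LinearMap.sub_apply, lie_add, add_lie, lie_sub, sub_lie] at *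
  rw [sub_sub, sub_eq_zero] at h1 h2
  rw [h1, h2, leibniz_lie X Y Z, ← lie_skew Y ((D Z) X)]
  abel

/-- If `∇` is flat, then `∇̄` is flat iff the torsion of `∇` is parallel. -/
theorem dual_flat_iff_parallel_torsion {K : Type*} [Field K] [CharZero K]
    {L : Type*} [LieRing L] [LieAlgebra K L] (D : L →ₗ[K] L →ₗ[K] L)
    (hflat : ∀ X Y Z : L, curvature (fun X Y => D X Y) X Y Z = 0) :
    (∀ X Y Z : L, curvature (dualConn (fun X Y => D X Y)) X Y Z = 0) ↔
      (∀ Z X Y : L, covTorsion (fun X Y => D X Y) Z X Y = 0) := by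
  constructor
  · intro h Z X Y
    rw [← dual_curv_eq_covTorsion D hflat]
    exact h X Y Z
  · intro h X Y Z
    rw [dual_curv_eq_covTorsion D hflat]
    exact h Z X Y
end

section
/- For a connection ∇ on a Lie algebra, the cyclic sum identity ∑_cyc T(X, T(Y,Z)) = ∑_cyc R(X,Y)Z + ∑_cyc R̄(X,Y)Z holds, where the cyclic sums run over cyclic permutations of (X,Y,Z). -/
/-- Cyclic sum of a trilinear expression. -/
def cyclicSum {L : Type*} [AddCommGroup L] (f : L → L → L → L) (X Y Z : L) : L :=
  f X Y Z + f Y Z X + f Z X Y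

/-- `∑_cyc T(X, T(Y,Z)) = ∑_cyc R(X,Y)Z + ∑_cyc R̄(X,Y)Z`. -/
theorem cyclic_torsion_identity {K : Type*} [Field K] [CharZero K]
    {L : Type*} [LieRing L] [LieAlgebra K L] (D : L →ₗ[K] L →ₗ[K] L) :
    ∀ X Y Z : L,
      cyclicSum (fun X Y Z => torsion (fun X Y => D X Y) X (torsion (fun X Y => D X Y) Y Z)) X Y Z
        = cyclicSum (curvature (fun X Y => D X Y)) X Y Z
          + cyclicSum (curvature (dualConn (fun X Y => D X Y))) X Y Z := by
  intro X Y Z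
  simp only [cyclicSum, torsion, curvature, dualConn, map_sub, map_add, LinearMap.sub_apply,
    LinearMap.add_apply, lie_sub, sub_lie, lie_add, add_lie]
  have j1 := lie_lie X Y Z
  have j2 := lie_lie Y Z X
  have j3 := lie_lie Z X Y
  simp only [← lie_skew Z Y, ← lie_skew X Z, ← lie_skew Y X, map_neg, LinearMap.neg_apply]
  linear_combination (norm := (simp only [lie_smul, lie_neg, neg_smul, one_smul, ← lie_skew Z Y,
    ← lie_skew X Z, ← lie_skew Y X]; abel)) j1 + j2 + j3 + lie_jacobi X Y Z
end

section
/- If ∇ is a connection on a Lie algebra such that both ∇ and its dual connection ∇̄ are flat (R = R̄ = 0), then the torsion T of ∇ is a Lie bracket: it is bilinear, skew-symmetric, and satisfies the Jacobi identity. -/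
private lemma skew0 {L : Type*} [LieRing L] (a b : L) : ⁅a, b⁆ + ⁅b, a⁆ = 0 := by
  rw [← lie_skew b a]; abel

/-- If `R = R̄ = 0`, then the torsion `T` is a Lie bracket:
bilinear, skew-symmetric, and Jacobi. -/
theorem torsion_is_lie_bracket {K : Type*} [Field K] [CharZero K]
    {L : Type*} [LieRing L] [LieAlgebra K L] (D : L →ₗ[K] L →ₗ[K] L)
    (hR : ∀ X Y Z : L, curvature (fun X Y => D X Y) X Y Z = 0)
    (hRbar : ∀ X Y Z : L, curvature (dualConn (fun X Y => D X Y)) X Y Z = 0) :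
    (∀ Y : L, IsLinearMap K (fun X => torsion (fun X Y => D X Y) X Y)) ∧
    (∀ X : L, IsLinearMap K (fun Y => torsion (fun X Y => D X Y) X Y)) ∧
    (∀ X Y : L, torsion (fun X Y => D X Y) X Y = - torsion (fun X Y => D X Y) Y X) ∧
    (∀ X Y Z : L,
      torsion (fun X Y => D X Y) X (torsion (fun X Y => D X Y) Y Z)
      + torsion (fun X Y => D X Y) Y (torsion (fun X Y => D X Y) Z X)
      + torsion (fun X Y => D X Y) Z (torsion (fun X Y => D X Y) X Y) = 0) := by
  refine ⟨?_, ?_, ?_, ?_⟩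
  · intro Y
    constructor
    · intro a b
      simp only [torsion, map_add, LinearMap.add_apply, add_lie]
      abel
    · intro c a
      simp only [torsion, map_smul, LinearMap.smul_apply, smul_lie, smul_sub]
  · intro X
    constructor
    · intro a b
      simp only [torsion, map_add, LinearMap.add_apply, lie_add]
      abel
    · intro c a
      simp only [torsion, map_smul, LinearMap.smul_apply, lie_smul, smul_sub]
  · intro X Y
    simp only [torsion, ← lie_skew Y X]
    abel
  · intro X Y Z
    have key :
        torsion (fun X Y => D X Y) X (torsion (fun X Y => D X Y) Y Z)
        + torsion (fun X Y => D X Y) Y (torsion (fun X Y => D X Y) Z X)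
        + torsion (fun X Y => D X Y) Z (torsion (fun X Y => D X Y) X Y)
        = curvature (dualConn (fun X Y => D X Y)) X Y Z
          - curvature (dualConn (fun X Y => D X Y)) X Z Y
          + curvature (dualConn (fun X Y => D X Y)) Y Z X
          - curvature (fun X Y => D X Y) X Z Y
          - curvature (fun X Y => D X Y) Y X Z
          - curvature (fun X Y => D X Y) Z Y X
        - (⁅X, ⁅Y, Z⁆⁆ + ⁅Y, ⁅Z, X⁆⁆ + ⁅Z, ⁅X, Y⁆⁆)
        + (⁅X, ⁅Z, Y⁆⁆ + ⁅Z, ⁅Y, X⁆⁆ + ⁅Y, ⁅X, Z⁆⁆)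
        - D Y (⁅X, Z⁆ + ⁅Z, X⁆)
        + (⁅X, ⁅Y, Z⁆⁆ + ⁅⁅Y, Z⁆, X⁆)
        - (⁅Y, ⁅X, Z⁆⁆ + ⁅⁅X, Z⁆, Y⁆)
        + (⁅Y, ⁅X, Z⁆⁆ + ⁅Y, ⁅Z, X⁆⁆)
        + (⁅Z, ⁅X, Y⁆⁆ + ⁅⁅X, Y⁆, Z⁆) := by
      simp only [torsion, curvature, dualConn, map_sub, map_add, LinearMap.sub_apply,
        LinearMap.add_apply, lie_sub, sub_lie, lie_add, add_lie]
      abel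
    rw [key, hR X Z Y, hR Y X Z, hR Z Y X, hRbar X Y Z, hRbar X Z Y, hRbar Y Z X,
      lie_jacobi X Y Z, lie_jacobi X Z Y, ← lie_add Y ⁅X, Z⁆ ⁅Z, X⁆, skew0 X Z,
      skew0 X ⁅Y, Z⁆, skew0 Y ⁅X, Z⁆, skew0 Z ⁅X, Y⁆]
    simp
end
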